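/- For every real p with 1 < p < ∞ one has the integral identity 2·∫_0^{(p−1)^{1/p}} (1 − t^p/(p−1))^{−1/p} dt = 2·(p−1)^{1/p} · (π/p) / sin(π/p); that is, the two expressions defining the constant π_p agree. -/

import Mathlib

open Real MeasureTheory intervalIntegral Set

lemma realBeta_eq (a b : ℝ) (ha : 0 < a) (hb : 0 < b) :
    ∫ x in (0:ℝ)..1, x ^ (a - 1) * (1 - x) ^ (b - 1)
      = Real.Gamma a * Real.Gamma b / Real.Gamma (a + b) := by
  have h1 : Complex.betaIntegral a b
      = ((∫ x in (0:ℝ)..1, x ^ (a - 1) * (1 - x) ^ (b - 1) : ℝ) : ℂ) := by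
    rw [Complex.betaIntegral, ← intervalIntegral.integral_ofReal]
    apply intervalIntegral.integral_congr
    intro x hx
    rw [Set.uIcc_of_le zero_le_one] at hx
    dsimp only
    rw [Complex.ofReal_mul, Complex.ofReal_cpow hx.1,
      Complex.ofReal_cpow (by linarith [hx.2] : (0:ℝ) ≤ 1 - x)]
    push_cast
    ring_nf
  have h2 := Complex.Gamma_mul_Gamma_eq_betaIntegral
    (s := (a:ℂ)) (t := (b:ℂ)) (by simpa using ha) (by simpa using hb)
  rw [h1, ← Complex.ofReal_add, Complex.Gamma_ofReal, Complex.Gamma_ofReal,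
    Complex.Gamma_ofReal, ← Complex.ofReal_mul, ← Complex.ofReal_mul] at h2
  have h3 := Complex.ofReal_injective h2
  have h4 : Real.Gamma (a + b) ≠ 0 := (Real.Gamma_pos_of_pos (by linarith)).ne'
  field_simp
  linarith [h3]

lemma realBeta_integrable (a b : ℝ) (ha : 0 < a) (hb : 0 < b) :
    IntervalIntegrable (fun x : ℝ => x ^ (a - 1) * (1 - x) ^ (b - 1)) volume 0 1 := by
  have hc := Complex.betaIntegral_convergent (u := (a:ℂ)) (v := (b:ℂ))
    (by simpa using ha) (by simpa using hb)
  rw [intervalIntegrable_iff_integrableOn_Ioc_of_le zero_le_one] at hc ⊢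
  have := hc.re
  refine (IntegrableOn.congr_fun this ?_ measurableSet_Ioc)
  intro x hx
  have h0 : (0:ℝ) ≤ x := hx.1.le
  have h1 : (0:ℝ) ≤ 1 - x := by linarith [hx.2]
  have hxx : ((x:ℂ) ^ ((a:ℂ) - 1) * (1 - (x:ℂ)) ^ ((b:ℂ) - 1))
      = ((x ^ (a - 1) * (1 - x) ^ (b - 1) : ℝ) : ℂ) := by
    rw [Complex.ofReal_mul, Complex.ofReal_cpow h0, Complex.ofReal_cpow h1]
    push_cast
    ring_nf
  dsimp only
  rw [hxx]
  simp



/-- identity (1.9). For `1 < p < ∞`,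
`2 ∫_0^{(p-1)^{1/p}} (1 - t^p/(p-1))^{-1/p} dt = 2 (p-1)^{1/p} (π/p) / sin(π/p)`,
i.e. the two expressions defining the constant `π_p` agree. -/
theorem piP_integral_identity (p : ℝ) (hp : 1 < p) :
    2 * ∫ t in (0 : ℝ)..((p - 1) ^ (1 / p)),
        (1 - t ^ p / (p - 1)) ^ (-(1 / p) : ℝ) =
      2 * (p - 1) ^ (1 / p) * (π / p) / Real.sin (π / p) := by
  have hp0 : 0 < p := by linarith
  have hp1 : 0 < p - 1 := by linarith
  have hq0 : 0 < 1 / p := by positivity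
  have hq1 : 1 / p < 1 := by rw [div_lt_one hp0]; exact hp
  set a : ℝ := (p - 1) ^ (1 / p) with ha_def
  have ha : 0 < a := Real.rpow_pos_of_pos hp1 _
  have hap : a ^ p = p - 1 := by
    rw [ha_def, one_div, Real.rpow_inv_rpow hp1.le hp0.ne']
  set g : ℝ → ℝ := fun t => (1 - t ^ p / (p - 1)) ^ (-(1 / p) : ℝ) with hg_def
  set f : ℝ → ℝ := fun u => a * u ^ (1 / p : ℝ) with hf_def
  set f' : ℝ → ℝ := fun u => a * (1 / p * u ^ (1 / p - 1 : ℝ)) with hf'_def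
  have hgf : ∀ u : ℝ, 0 ≤ u → g (f u) = (1 - u) ^ (-(1 / p) : ℝ) := by
    intro u hu
    have hfp : (a * u ^ (1 / p : ℝ)) ^ p = (p - 1) * u := by
      rw [Real.mul_rpow ha.le (Real.rpow_nonneg hu _), hap,
        one_div, Real.rpow_inv_rpow hu hp0.ne']
    simp only [hg_def, hf_def]
    rw [hfp, mul_comm, mul_div_assoc, div_self hp1.ne', mul_one]
  -- continuity of g on (0, a)
  have hgc : ContinuousOn g (Set.Ioo 0 a) := by
    intro t ht
    have ht0 : (0:ℝ) < t := ht.1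
    have hbase : 0 < 1 - t ^ p / (p - 1) := by
      have htp : t ^ p < p - 1 := by
        calc t ^ p < a ^ p := Real.rpow_lt_rpow ht0.le ht.2 hp0
          _ = p - 1 := hap
      rw [sub_pos, div_lt_one hp1]; exact htp
    have c1 : ContinuousAt (fun t : ℝ => 1 - t ^ p / (p - 1)) t :=
      continuousAt_const.sub ((Real.continuousAt_rpow_const t p (Or.inl ht0.ne')).div_const _)
    exact (c1.rpow_const (Or.inl hbase.ne')).continuousWithinAt
  -- integrability of g on [0, a]
  have hgi : MeasureTheory.IntegrableOn g (Set.Icc 0 a) := by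
    have h1 : IntervalIntegrable (fun x : ℝ => x ^ (-(1/p) : ℝ)) volume 0 a :=
      intervalIntegral.intervalIntegrable_rpow' (by linarith)
    have h2 : IntervalIntegrable (fun t : ℝ => (a - t) ^ (-(1/p) : ℝ)) volume 0 a := by
      simpa using (h1.comp_sub_left a).symm
    have hM : MeasureTheory.IntegrableOn
        (fun t : ℝ => a ^ (1/p : ℝ) * (a - t) ^ (-(1/p) : ℝ)) (Set.Icc 0 a) := by
      rw [← intervalIntegrable_iff_integrableOn_Icc_of_le ha.le]
      exact h2.const_mul _
    have hmeas : MeasureTheory.AEStronglyMeasurable g (volume.restrict (Set.Icc 0 a)) := by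
      rw [← MeasureTheory.Measure.restrict_congr_set MeasureTheory.Ioo_ae_eq_Icc]
      exact hgc.aestronglyMeasurable measurableSet_Ioo
    refine hM.mono' hmeas ?_
    rw [MeasureTheory.ae_restrict_iff' measurableSet_Icc]
    filter_upwards with t ht
    obtain ⟨ht0, hta⟩ := ht
    have hbase0 : 0 ≤ 1 - t ^ p / (p - 1) := by
      have : t ^ p ≤ a ^ p := Real.rpow_le_rpow ht0 hta hp0.le
      rw [hap] at this
      have : t ^ p / (p - 1) ≤ 1 := by rw [div_le_one hp1]; exact this
      linarith
    rw [Real.norm_of_nonneg (Real.rpow_nonneg hbase0 _)]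
    rcases eq_or_lt_of_le hta with rfl | hta'
    · simp [hap, div_self hp1.ne', Real.zero_rpow (neg_ne_zero.mpr hq0.ne'), Real.zero_rpow (neg_ne_zero.mpr (inv_ne_zero hp0.ne'))]
    · -- t < a
      have hMeq : ((a - t) / a) ^ (-(1/p) : ℝ) = a ^ (1/p : ℝ) * (a - t) ^ (-(1/p) : ℝ) := by
        rw [Real.div_rpow (by linarith : (0:ℝ) ≤ a - t) ha.le, Real.rpow_neg ha.le,
          div_inv_eq_mul, mul_comm]
      rw [← hMeq]
      have hbb : (a - t) / a ≤ 1 - t ^ p / (p - 1) := by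
        have hdiv : t ^ p / (p - 1) = (t / a) ^ p := by
          rw [Real.div_rpow ht0 ha.le, hap]
        rw [hdiv]
        have hta2 : t / a ≤ 1 := by rw [div_le_one ha]; exact hta
        have h1 : (t / a) ^ p ≤ t / a := by
          rcases eq_or_lt_of_le (by positivity : (0:ℝ) ≤ t / a) with h | h
          · rw [← h, Real.zero_rpow hp0.ne']
          · calc (t / a) ^ p ≤ (t / a) ^ (1:ℝ) :=
                Real.rpow_le_rpow_of_exponent_ge h hta2 hp.le
              _ = t / a := Real.rpow_one _
        have : (a - t)/a = 1 - t/a := by field_simp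
        rw [this]
        linarith
      exact Real.rpow_le_rpow_of_nonpos (div_pos (by linarith) ha) hbb (by linarith)
  -- the substitution
  have hf0 : f 0 = 0 := by
    simp only [hf_def]; rw [Real.zero_rpow hq0.ne', mul_zero]
  have hf1 : f 1 = a := by simp only [hf_def]; rw [Real.one_rpow, mul_one]
  have key : (∫ u in (0:ℝ)..1, f' u • (g ∘ f) u) = ∫ t in (0:ℝ)..a, g t := by
    have hcf : ContinuousOn f (Set.uIcc 0 1) := by
      apply Continuous.continuousOn
      apply continuous_const.mul
      rw [continuous_iff_continuousAt]
      exact fun u => Real.continuousAt_rpow_const u _ (Or.inr hq0.le)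
    have hff' : ∀ x ∈ Set.Ioo (min (0:ℝ) 1) (max 0 1),
        HasDerivWithinAt f (f' x) (Set.Ioi x) x := by
      intro x hx
      rw [show (min (0:ℝ) 1) = 0 by norm_num, show (max (0:ℝ) 1) = 1 by norm_num] at hx
      have := (Real.hasDerivAt_rpow_const (x := x) (p := 1/p) (Or.inl hx.1.ne')).const_mul a
      exact this.hasDerivWithinAt
    have himg1 : f '' Set.Ioo (min (0:ℝ) 1) (max 0 1) ⊆ Set.Ioo 0 a := by
      rw [(by norm_num : min (0:ℝ) 1 = 0), (by norm_num : max (0:ℝ) 1 = 1)]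
      rintro _ ⟨u, hu, rfl⟩
      constructor
      · have := Real.rpow_pos_of_pos hu.1 (1/p)
        simp only [hf_def]; positivity
      · have h2 : u ^ (1/p : ℝ) < 1 := Real.rpow_lt_one hu.1.le hu.2 hq0
        calc f u < a * 1 := by
              simp only [hf_def]
              exact mul_lt_mul_of_pos_left h2 ha
          _ = a := mul_one a
    have himg2 : f '' Set.uIcc (0:ℝ) 1 ⊆ Set.Icc 0 a := by
      rw [Set.uIcc_of_le zero_le_one]
      rintro _ ⟨u, hu, rfl⟩
      constructor
      · have := Real.rpow_nonneg hu.1 (1/p : ℝ)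
        simp only [hf_def]; positivity
      · have h2 : u ^ (1/p : ℝ) ≤ 1 := Real.rpow_le_one hu.1 hu.2 hq0.le
        calc f u ≤ a * 1 := by
              simp only [hf_def]
              exact mul_le_mul_of_nonneg_left h2 ha.le
          _ = a := mul_one a
    have hbetaInt : MeasureTheory.IntegrableOn
        (fun u : ℝ => (a * (1/p)) * (u ^ ((1/p : ℝ) - 1) * (1 - u) ^ ((1 - 1/p : ℝ) - 1)))
        (Set.Icc (0:ℝ) 1) := by
      rw [← intervalIntegrable_iff_integrableOn_Icc_of_le zero_le_one]
      exact (realBeta_integrable (1/p) (1 - 1/p) hq0 (by linarith)).const_mul _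
    have hg2 : MeasureTheory.IntegrableOn (fun x => f' x • (g ∘ f) x) (Set.uIcc (0:ℝ) 1) := by
      rw [Set.uIcc_of_le zero_le_one]
      refine MeasureTheory.IntegrableOn.congr_fun hbetaInt ?_ measurableSet_Icc
      intro u hu
      have hexp : ((1:ℝ) - 1/p) - 1 = -(1/p) := by ring
      simp only [Function.comp, smul_eq_mul, hf'_def]
      rw [hgf u hu.1, hexp]
      ring
    have key0 := intervalIntegral.integral_comp_smul_deriv''' hcf hff' (hgc.mono himg1)
      (hgi.mono_set himg2) hg2
    rw [hf0, hf1] at key0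
    exact key0
  -- evaluate the left integral in terms of the Beta function
  have heval : (∫ u in (0:ℝ)..1, f' u • (g ∘ f) u)
      = (a * (1/p)) * ∫ u in (0:ℝ)..1, u ^ ((1/p : ℝ) - 1) * (1 - u) ^ ((1 - 1/p : ℝ) - 1) := by
    rw [← intervalIntegral.integral_const_mul]
    apply intervalIntegral.integral_congr
    intro u hu
    rw [Set.uIcc_of_le zero_le_one] at hu
    have hexp : ((1:ℝ) - 1/p) - 1 = -(1/p) := by ring
    simp only [Function.comp, smul_eq_mul, hf'_def]
    rw [hgf u hu.1, hexp]
    ring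
  have hbeta := realBeta_eq (1/p) (1 - 1/p) hq0 (by linarith)
  have hsum : (1:ℝ)/p + (1 - 1/p) = 1 := by ring
  rw [hsum, Real.Gamma_one, div_one] at hbeta
  have hrefl : Real.Gamma (1/p) * Real.Gamma (1 - 1/p) = π / Real.sin (π * (1/p)) :=
    Real.Gamma_mul_Gamma_one_sub (1/p)
  have hsin : 0 < Real.sin (π / p) :=
    Real.sin_pos_of_pos_of_lt_pi (by positivity) (div_lt_self Real.pi_pos hp)
  rw [← key, heval, hbeta, hrefl, mul_one_div]
  field_simp
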